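/- Let (A_n)_{n≥1} and (B_n)_{n≥1} be sequences of maps on simplices with A_n, B_n : Δ(n+3,1) → Δ(n+2,1) linear, such that Σ_{n≥1} sup{‖A_n v − B_n v‖_1 : v ∈ Δ(n+3,1)} < ∞. Then the inverse limits lim←(Δ(n+2,1), A_n) and lim←(Δ(n+2,1), B_n) are affinely homeomorphic. -/

import Mathlib

/-- The simplex `Δ(k,p) = {v ∈ (ℝ⁺)^k : Σ v_i = 1/p}`; `Δ(k,1)` is the unit simplex. -/
def simplexSet (k : ℕ) (p : ℕ) : Set (Fin k → ℝ) :=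
  {v | (∀ i, 0 ≤ v i) ∧ (∑ i, v i) = 1 / (p : ℝ)}

/-- The sets `S ⊆ E` and `T ⊆ F` are affinely homeomorphic. -/
def AffinelyHomeomorphic {E F : Type*}
    [AddCommGroup E] [Module ℝ E] [TopologicalSpace E]
    [AddCommGroup F] [Module ℝ F] [TopologicalSpace F]
    (S : Set E) (T : Set F) : Prop :=
  ∃ f : S ≃ₜ T, ∀ (x y z : S) (t : ℝ), 0 ≤ t → t ≤ 1 →
    (z : E) = t • (x : E) + (1 - t) • (y : E) →
    (f z : F) = t • (f x : F) + (1 - t) • (f y : F)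

open Filter Topology Finset

lemma single_mem {k : ℕ} (j : Fin k) : Pi.single j (1:ℝ) ∈ simplexSet k 1 := by
  refine ⟨fun i => ?_, ?_⟩
  · rcases eq_or_ne i j with rfl|h
    · simp
    · simp [Pi.single_eq_of_ne h]
  · simp [Pi.single_apply, Finset.sum_ite_eq']

lemma nonexp {a b : ℕ} (T : (Fin a → ℝ) →ₗ[ℝ] (Fin b → ℝ))
    (hT : ∀ v ∈ simplexSet a 1, T v ∈ simplexSet b 1) (u : Fin a → ℝ) :
    ∑ i, |T u i| ≤ ∑ j, |u j| := by
  have hrep : u = ∑ j, u j • (Pi.single j (1:ℝ) : Fin a → ℝ) := by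
    funext i
    simp [Pi.single_apply, Finset.sum_ite_eq']
  have hTu : ∀ i, T u i = ∑ j, u j * T (Pi.single j (1:ℝ)) i := by
    intro i
    conv_lhs => rw [hrep]
    rw [map_sum]
    simp [Finset.sum_apply]
  have hpos : ∀ (j : Fin a) (i : Fin b), 0 ≤ T (Pi.single j (1:ℝ)) i :=
    fun j i => (hT _ (single_mem j)).1 i
  have hsum1 : ∀ (j : Fin a), ∑ i, T (Pi.single j (1:ℝ)) i = 1 := by
    intro j
    have := (hT _ (single_mem j)).2
    simpa using this
  calc ∑ i, |T u i| ≤ ∑ i, ∑ j, |u j| * T (Pi.single j (1:ℝ)) i := by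
        refine Finset.sum_le_sum fun i _ => ?_
        rw [hTu i]
        refine (Finset.abs_sum_le_sum_abs _ _).trans ?_
        refine Finset.sum_le_sum fun j _ => ?_
        rw [abs_mul, abs_of_nonneg (hpos j i)]
    _ = ∑ j, |u j| * ∑ i, T (Pi.single j (1:ℝ)) i := by
        rw [Finset.sum_comm]; simp [Finset.mul_sum]
    _ = ∑ j, |u j| := by simp [hsum1]

def Qmap (C : ∀ n : ℕ, (Fin (n + 3) → ℝ) →ₗ[ℝ] (Fin (n + 2) → ℝ)) :
    (n k : ℕ) → (Fin (n + k + 2) → ℝ) →ₗ[ℝ] (Fin (n + 2) → ℝ)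
  | _, 0 => LinearMap.id
  | n, (k+1) => (Qmap C n k).comp (C (n + k))

lemma Qmap_mem {C : ∀ n : ℕ, (Fin (n + 3) → ℝ) →ₗ[ℝ] (Fin (n + 2) → ℝ)}
    (hC : ∀ n, ∀ v ∈ simplexSet (n + 3) 1, C n v ∈ simplexSet (n + 2) 1) :
    ∀ k n, ∀ v ∈ simplexSet (n + k + 2) 1, Qmap C n k v ∈ simplexSet (n + 2) 1 := by
  intro k
  induction k with
  | zero => intro n v hv; exact hv
  | succ k ih =>
    intro n v hv
    have h1 : C (n + k) v ∈ simplexSet (n + k + 2) 1 := hC (n + k) v hv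
    exact ih n _ h1

lemma Qmap_nonexp {C : ∀ n : ℕ, (Fin (n + 3) → ℝ) →ₗ[ℝ] (Fin (n + 2) → ℝ)}
    (hC : ∀ n, ∀ v ∈ simplexSet (n + 3) 1, C n v ∈ simplexSet (n + 2) 1)
    (n k : ℕ) (u : Fin (n + k + 2) → ℝ) :
    ∑ i, |Qmap C n k u i| ≤ ∑ j, |u j| :=
  nonexp (Qmap C n k) (Qmap_mem hC k n) u

noncomputable def eps (A B : ∀ n : ℕ, (Fin (n + 3) → ℝ) →ₗ[ℝ] (Fin (n + 2) → ℝ)) (n : ℕ) : ℝ :=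
  ⨆ v : (simplexSet (n + 3) 1), ∑ i, |A n (v : Fin (n + 3) → ℝ) i - B n (v : Fin (n + 3) → ℝ) i|

section
variable {A B : ∀ n : ℕ, (Fin (n + 3) → ℝ) →ₗ[ℝ] (Fin (n + 2) → ℝ)}
  (hA : ∀ n, ∀ v ∈ simplexSet (n + 3) 1, A n v ∈ simplexSet (n + 2) 1)
  (hB : ∀ n, ∀ v ∈ simplexSet (n + 3) 1, B n v ∈ simplexSet (n + 2) 1)

include hA hB

lemma bdd2 (n : ℕ) (v : Fin (n + 3) → ℝ) (hv : v ∈ simplexSet (n + 3) 1) :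
    ∑ i, |A n v i - B n v i| ≤ 2 := by
  have h1 : ∑ i, |A n v i| = 1 := by
    have := hA n v hv
    rw [Finset.sum_congr rfl fun i _ => abs_of_nonneg (this.1 i)]
    simpa using this.2
  have h2 : ∑ i, |B n v i| = 1 := by
    have := hB n v hv
    rw [Finset.sum_congr rfl fun i _ => abs_of_nonneg (this.1 i)]
    simpa using this.2
  calc ∑ i, |A n v i - B n v i| ≤ ∑ i, (|A n v i| + |B n v i|) :=
        Finset.sum_le_sum fun i _ => abs_sub _ _
    _ = 2 := by rw [Finset.sum_add_distrib, h1, h2]; norm_num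

lemma le_eps (n : ℕ) (v : Fin (n + 3) → ℝ) (hv : v ∈ simplexSet (n + 3) 1) :
    ∑ i, |A n v i - B n v i| ≤ eps A B n := by
  have : Nonempty (simplexSet (n + 3) 1) := ⟨⟨v, hv⟩⟩
  exact le_ciSup (f := fun v : simplexSet (n + 3) 1 =>
      ∑ i, |A n (v : Fin (n + 3) → ℝ) i - B n (v : Fin (n + 3) → ℝ) i|)
    ⟨2, by rintro _ ⟨w, rfl⟩; exact bdd2 hA hB n w.1 w.2⟩ ⟨v, hv⟩

lemma eps_nonneg (n : ℕ) : 0 ≤ eps A B n := by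
  have h0 : (Pi.single 0 (1:ℝ) : Fin (n + 3) → ℝ) ∈ simplexSet (n + 3) 1 := single_mem 0
  exact le_trans (Finset.sum_nonneg fun i _ => abs_nonneg _) (le_eps hA hB n _ h0)

lemma tele : ∀ (k n : ℕ), ∀ v ∈ simplexSet (n + k + 2) 1,
    ∑ i, |Qmap A n k v i - Qmap B n k v i| ≤ ∑ j ∈ Finset.range k, eps A B (n + j) := by
  intro k
  induction k with
  | zero => intro n v _; simp [Qmap]
  | succ k ih =>
    intro n v hv
    have hAv : A (n + k) v ∈ simplexSet (n + k + 2) 1 := hA (n + k) v hv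
    have step1 : ∑ i, |Qmap A n (k+1) v i - Qmap B n (k+1) v i| ≤
        (∑ i, |Qmap A n k (A (n+k) v) i - Qmap B n k (A (n+k) v) i|) +
        ∑ i, |Qmap B n k (A (n+k) v) i - Qmap B n k (B (n+k) v) i| := by
      rw [← Finset.sum_add_distrib]
      refine Finset.sum_le_sum fun i _ => ?_
      have e1 : Qmap A n (k+1) v i = Qmap A n k (A (n+k) v) i := rfl
      have e2 : Qmap B n (k+1) v i = Qmap B n k (B (n+k) v) i := rfl
      rw [e1, e2]
      exact abs_sub_le _ _ _
    have step2 : ∑ i, |Qmap B n k (A (n+k) v) i - Qmap B n k (B (n+k) v) i| ≤ eps A B (n + k) := by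
      have heq : ∀ i, Qmap B n k (A (n+k) v) i - Qmap B n k (B (n+k) v) i =
          Qmap B n k (A (n+k) v - B (n+k) v) i := by
        intro i; rw [map_sub]; simp
      calc ∑ i, |Qmap B n k (A (n+k) v) i - Qmap B n k (B (n+k) v) i|
          = ∑ i, |Qmap B n k (A (n+k) v - B (n+k) v) i| := by
            exact Finset.sum_congr rfl fun i _ => by rw [heq i]
        _ ≤ ∑ j, |(A (n+k) v - B (n+k) v) j| := Qmap_nonexp hB n k _
        _ = ∑ j, |A (n+k) v j - B (n+k) v j| := by simp
        _ ≤ eps A B (n + k) := le_eps hA hB (n+k) v hv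
    calc ∑ i, |Qmap A n (k+1) v i - Qmap B n (k+1) v i|
        ≤ (∑ i, |Qmap A n k (A (n+k) v) i - Qmap B n k (A (n+k) v) i|) + eps A B (n+k) := by
          exact step1.trans (by linarith)
      _ ≤ (∑ j ∈ Finset.range k, eps A B (n + j)) + eps A B (n+k) := by
          exact add_le_add_left (ih n _ hAv) _
      _ = ∑ j ∈ Finset.range (k+1), eps A B (n + j) := (Finset.sum_range_succ _ _).symm

end

lemma shiftL (B : ∀ n : ℕ, (Fin (n + 3) → ℝ) →ₗ[ℝ] (Fin (n + 2) → ℝ)) :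
    ∀ (m n : ℕ) (x : ∀ k : ℕ, Fin (k + 2) → ℝ),
    B n (Qmap B (n+1) m (x (n+1+m))) = Qmap B n (m+1) (x (n+m+1)) := by
  intro m
  induction m with
  | zero => intro n x; rfl
  | succ m ih =>
    intro n x
    exact ih n (fun k => B k (x (k+1)))

lemma x_eq_Qmap {A : ∀ n : ℕ, (Fin (n + 3) → ℝ) →ₗ[ℝ] (Fin (n + 2) → ℝ)}
    {x : ∀ k : ℕ, Fin (k + 2) → ℝ} (hx2 : ∀ n, x n = A n (x (n+1))) :
    ∀ (m n : ℕ), x n = Qmap A n m (x (n + m)) := by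
  intro m
  induction m with
  | zero => intro n; rfl
  | succ m ih =>
    intro n
    show x n = Qmap A n m (A (n+m) (x (n+m+1)))
    rw [← hx2 (n+m)]
    exact ih n

noncomputable def FF (B : ∀ n : ℕ, (Fin (n + 3) → ℝ) →ₗ[ℝ] (Fin (n + 2) → ℝ))
    (x : ∀ k : ℕ, Fin (k + 2) → ℝ) (n : ℕ) (i : Fin (n + 2)) : ℝ :=
  limUnder atTop (fun m => Qmap B n m (x (n + m)) i)

section main
variable {A B : ∀ n : ℕ, (Fin (n + 3) → ℝ) →ₗ[ℝ] (Fin (n + 2) → ℝ)}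
  (hA : ∀ n, ∀ v ∈ simplexSet (n + 3) 1, A n v ∈ simplexSet (n + 2) 1)
  (hB : ∀ n, ∀ v ∈ simplexSet (n + 3) 1, B n v ∈ simplexSet (n + 2) 1)
  (hsum : Summable (eps A B))
  {x : ∀ k : ℕ, Fin (k + 2) → ℝ}
  (hx1 : ∀ n, x n ∈ simplexSet (n + 2) 1)
  (hx2 : ∀ n, x n = A n (x (n + 1)))

include hA hB hsum hx1 hx2

lemma step_bound (n m : ℕ) :
    ∑ i, |Qmap B n (m+1) (x (n+m+1)) i - Qmap B n m (x (n+m)) i| ≤ eps A B (n+m) := by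
  have hv : x (n+m+1) ∈ simplexSet (n+m+3) 1 := hx1 (n+m+1)
  calc ∑ i, |Qmap B n (m+1) (x (n+m+1)) i - Qmap B n m (x (n+m)) i|
      = ∑ i, |Qmap B n m (B (n+m) (x (n+m+1)) - A (n+m) (x (n+m+1))) i| := by
        refine Finset.sum_congr rfl fun i _ => ?_
        congr 1
        have e1 : Qmap B n (m+1) (x (n+m+1)) i = Qmap B n m (B (n+m) (x (n+m+1))) i := rfl
        rw [e1, hx2 (n+m), map_sub]
        simp
    _ ≤ ∑ j, |(B (n+m) (x (n+m+1)) - A (n+m) (x (n+m+1))) j| := Qmap_nonexp hB n m _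
    _ = ∑ j, |A (n+m) (x (n+m+1)) j - B (n+m) (x (n+m+1)) j| := by
        refine Finset.sum_congr rfl fun j _ => ?_
        rw [Pi.sub_apply, abs_sub_comm]
    _ ≤ eps A B (n+m) := le_eps hA hB (n+m) _ hv

lemma tendsto_FF (n : ℕ) (i : Fin (n + 2)) :
    Filter.Tendsto (fun m => Qmap B n m (x (n + m)) i) atTop (𝓝 (FF B x n i)) := by
  have hse : Summable (fun m => eps A B (n + m)) :=
    hsum.comp_injective (add_right_injective n)
  have hc : CauchySeq (fun m => Qmap B n m (x (n + m)) i) := by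
    apply cauchySeq_of_summable_dist
    refine Summable.of_nonneg_of_le (fun m => dist_nonneg) (fun m => ?_) hse
    rw [Real.dist_eq, abs_sub_comm]
    calc |Qmap B n (m+1) (x (n+m+1)) i - Qmap B n m (x (n+m)) i|
        ≤ ∑ i', |Qmap B n (m+1) (x (n+m+1)) i' - Qmap B n m (x (n+m)) i'| :=
          Finset.single_le_sum (f := fun i' => |Qmap B n (m+1) (x (n+m+1)) i' - Qmap B n m (x (n+m)) i'|)
            (fun i' _ => abs_nonneg _) (Finset.mem_univ i)
      _ ≤ eps A B (n+m) := step_bound hA hB hsum hx1 hx2 n m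
  obtain ⟨L, hL⟩ := cauchySeq_tendsto_of_complete hc
  rwa [FF, hL.limUnder_eq]

lemma diff_bound (n m : ℕ) : ∀ d : ℕ,
    ∑ i, |Qmap B n (m+d) (x (n+(m+d))) i - Qmap B n m (x (n+m)) i| ≤
      ∑ j ∈ Finset.range d, eps A B (n+m+j) := by
  intro d
  induction d with
  | zero => simp
  | succ d ih =>
    calc ∑ i, |Qmap B n (m+(d+1)) (x (n+(m+(d+1)))) i - Qmap B n m (x (n+m)) i|
        ≤ (∑ i, |Qmap B n ((m+d)+1) (x (n+(m+d)+1)) i - Qmap B n (m+d) (x (n+(m+d))) i|)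
            + ∑ i, |Qmap B n (m+d) (x (n+(m+d))) i - Qmap B n m (x (n+m)) i| := by
          rw [← Finset.sum_add_distrib]
          refine Finset.sum_le_sum fun i _ => ?_
          exact abs_sub_le _ _ _
      _ ≤ eps A B (n+(m+d)) + ∑ j ∈ Finset.range d, eps A B (n+m+j) :=
          add_le_add (step_bound hA hB hsum hx1 hx2 n (m+d)) ih
      _ = ∑ j ∈ Finset.range (d+1), eps A B (n+m+j) := by
          rw [Finset.sum_range_succ, add_comm, add_assoc]

lemma unif_bound (n m : ℕ) :
    ∑ i, |FF B x n i - Qmap B n m (x (n+m)) i| ≤ ∑' j, eps A B (j + (n + m)) := by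
  have hse : Summable (fun j => eps A B (n + m + j)) :=
    hsum.comp_injective (add_right_injective (n + m))
  have hbd : ∀ d : ℕ,
      ∑ i, |Qmap B n (m+d) (x (n+(m+d))) i - Qmap B n m (x (n+m)) i| ≤
        ∑' j, eps A B (j + (n + m)) := by
    intro d
    refine (diff_bound hA hB hsum hx1 hx2 n m d).trans ?_
    have := Summable.sum_le_tsum (Finset.range d) (fun j _ => eps_nonneg hA hB _) hse
    refine this.trans (le_of_eq (tsum_congr fun j => by rw [add_comm j (n+m)]))
  have htend : Filter.Tendsto
      (fun d => ∑ i, |Qmap B n (m+d) (x (n+(m+d))) i - Qmap B n m (x (n+m)) i|)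
      atTop (𝓝 (∑ i, |FF B x n i - Qmap B n m (x (n+m)) i|)) := by
    refine tendsto_finset_sum _ fun i _ => ?_
    have hcoord : Filter.Tendsto (fun d => Qmap B n (m+d) (x (n+(m+d))) i) atTop
        (𝓝 (FF B x n i)) := by
      have hg : Filter.Tendsto (fun d : ℕ => m + d) atTop atTop :=
        (tendsto_add_atTop_nat m).congr (fun d => Nat.add_comm d m)
      exact (tendsto_FF hA hB hsum hx1 hx2 n i).comp hg
    exact ((hcoord.sub tendsto_const_nhds).abs).congr (fun d => by rw [abs_sub_comm])
  exact le_of_tendsto htend (Filter.Eventually.of_forall hbd)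

lemma Qmap_x_mem (n m : ℕ) : Qmap B n m (x (n + m)) ∈ simplexSet (n + 2) 1 :=
  Qmap_mem hB m n (x (n + m)) (hx1 (n + m))

lemma FF_mem1 (n : ℕ) : FF B x n ∈ simplexSet (n + 2) 1 := by
  constructor
  · intro i
    refine ge_of_tendsto' (tendsto_FF hA hB hsum hx1 hx2 n i) fun m => ?_
    exact (Qmap_x_mem hA hB hsum hx1 hx2 n m).1 i
  · have h1 : Filter.Tendsto (fun m => ∑ i, Qmap B n m (x (n + m)) i) atTop
        (𝓝 (∑ i, FF B x n i)) :=
      tendsto_finset_sum _ fun i _ => tendsto_FF hA hB hsum hx1 hx2 n i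
    have h2 : (fun m => ∑ i, Qmap B n m (x (n + m)) i) = fun _ => (1 : ℝ) := by
      funext m
      have := (Qmap_x_mem hA hB hsum hx1 hx2 n m).2
      simpa using this
    rw [h2] at h1
    simpa using tendsto_nhds_unique h1 tendsto_const_nhds

lemma FF_mem2 (n : ℕ) : FF B x n = B n (FF B x (n + 1)) := by
  funext i
  have hv : Filter.Tendsto (fun m => Qmap B (n+1) m (x (n+1+m))) atTop
      (𝓝 (FF B x (n+1))) := by
    rw [tendsto_pi_nhds]
    intro j
    exact tendsto_FF hA hB hsum hx1 hx2 (n+1) j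
  have hBc : Continuous (B n) := (B n).continuous_of_finiteDimensional
  have h1 : Filter.Tendsto (fun m => B n (Qmap B (n+1) m (x (n+1+m))) i) atTop
      (𝓝 (B n (FF B x (n+1)) i)) :=
    ((continuous_apply i).tendsto _).comp ((hBc.tendsto _).comp hv)
  have h2 : Filter.Tendsto (fun m => B n (Qmap B (n+1) m (x (n+1+m))) i) atTop
      (𝓝 (FF B x n i)) := by
    have := (tendsto_FF hA hB hsum hx1 hx2 n i).comp (tendsto_add_atTop_nat 1)
    refine this.congr fun m => ?_
    show Qmap B n (m+1) (x (n+(m+1))) i = B n (Qmap B (n+1) m (x (n+1+m))) i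
    rw [shiftL B m n x]
    rfl
  exact tendsto_nhds_unique h2 h1

lemma FF_close (k : ℕ) : ∑ j, |FF B x k j - x k j| ≤ ∑' j, eps A B (j + k) := by
  have hse : Summable (fun j => eps A B (k + j)) :=
    hsum.comp_injective (add_right_injective k)
  have hbd : ∀ m : ℕ, ∑ j, |Qmap B k m (x (k+m)) j - x k j| ≤ ∑' j, eps A B (j + k) := by
    intro m
    have e : x k = Qmap A k m (x (k + m)) := x_eq_Qmap hx2 m k
    calc ∑ j, |Qmap B k m (x (k+m)) j - x k j|
        = ∑ j, |Qmap A k m (x (k+m)) j - Qmap B k m (x (k+m)) j| := by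
          refine Finset.sum_congr rfl fun j _ => ?_
          rw [abs_sub_comm]
          congr 1
          rw [← e]
      _ ≤ ∑ j' ∈ Finset.range m, eps A B (k + j') := tele hA hB m k _ (hx1 (k+m))
      _ ≤ ∑' j, eps A B (k + j) :=
          Summable.sum_le_tsum (Finset.range m) (fun j _ => eps_nonneg hA hB _) hse
      _ = ∑' j, eps A B (j + k) := tsum_congr fun j => by rw [add_comm]
  have htend : Filter.Tendsto (fun m => ∑ j, |Qmap B k m (x (k+m)) j - x k j|) atTop
      (𝓝 (∑ j, |FF B x k j - x k j|)) := by
    refine tendsto_finset_sum _ fun j _ => ?_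
    exact ((tendsto_FF hA hB hsum hx1 hx2 k j).sub tendsto_const_nhds).abs
  exact le_of_tendsto htend (Filter.Eventually.of_forall hbd)

lemma FF_inv : FF A (FF B x) = x := by
  have hy1 : ∀ n, FF B x n ∈ simplexSet (n+2) 1 := fun n => FF_mem1 hA hB hsum hx1 hx2 n
  have hy2 : ∀ n, FF B x n = B n (FF B x (n+1)) := fun n => FF_mem2 hA hB hsum hx1 hx2 n
  have hsum' : Summable (eps B A) := by
    have e : eps B A = eps A B := by
      funext n
      unfold eps
      congr 1
      funext v
      exact Finset.sum_congr rfl fun i _ => abs_sub_comm _ _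
    rw [e]; exact hsum
  funext n i
  have h1 : Filter.Tendsto (fun m => Qmap A n m (FF B x (n+m)) i) atTop
      (𝓝 (FF A (FF B x) n i)) :=
    tendsto_FF hB hA hsum' hy1 hy2 n i
  have hbd : ∀ m, |Qmap A n m (FF B x (n+m)) i - x n i| ≤ ∑' j, eps A B (j + (n+m)) := by
    intro m
    have e : x n = Qmap A n m (x (n+m)) := x_eq_Qmap hx2 m n
    calc |Qmap A n m (FF B x (n+m)) i - x n i|
        ≤ ∑ i', |Qmap A n m (FF B x (n+m)) i' - x n i'| :=
          Finset.single_le_sum (f := fun i' => |Qmap A n m (FF B x (n+m)) i' - x n i'|)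
            (fun i' _ => abs_nonneg _) (Finset.mem_univ i)
      _ = ∑ i', |Qmap A n m (FF B x (n+m) - x (n+m)) i'| := by
          refine Finset.sum_congr rfl fun i' _ => ?_
          congr 1
          rw [map_sub]
          rw [e]
          simp
      _ ≤ ∑ j, |(FF B x (n+m) - x (n+m)) j| := Qmap_nonexp hA n m _
      _ = ∑ j, |FF B x (n+m) j - x (n+m) j| := by simp
      _ ≤ ∑' j, eps A B (j + (n+m)) := FF_close hA hB hsum hx1 hx2 (n+m)
  have htail : Filter.Tendsto (fun m => ∑' j, eps A B (j + (n+m))) atTop (𝓝 0) := by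
    have h := tendsto_sum_nat_add (eps A B)
    have hg : Filter.Tendsto (fun m : ℕ => n + m) atTop atTop :=
      (tendsto_add_atTop_nat n).congr (fun d => Nat.add_comm d n)
    exact h.comp hg
  have h0 : Filter.Tendsto (fun m => Qmap A n m (FF B x (n+m)) i - x n i) atTop (𝓝 0) :=
    squeeze_zero_norm (fun m => by simpa [Real.norm_eq_abs] using hbd m) htail
  have h2 : Filter.Tendsto (fun m => Qmap A n m (FF B x (n+m)) i) atTop (𝓝 (x n i)) := by
    have := h0.add_const (x n i)
    simpa using this
  exact tendsto_nhds_unique h1 h2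

end main

lemma FF_continuous {A B : ∀ n : ℕ, (Fin (n + 3) → ℝ) →ₗ[ℝ] (Fin (n + 2) → ℝ)}
    (hA : ∀ n, ∀ v ∈ simplexSet (n + 3) 1, A n v ∈ simplexSet (n + 2) 1)
    (hB : ∀ n, ∀ v ∈ simplexSet (n + 3) 1, B n v ∈ simplexSet (n + 2) 1)
    (hsum : Summable (eps A B)) :
    Continuous (fun v : {v : ∀ n : ℕ, Fin (n + 2) → ℝ //
        (∀ n, v n ∈ simplexSet (n + 2) 1) ∧ ∀ n, v n = A n (v (n + 1))} => FF B v.1) := by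
  refine continuous_pi fun n => continuous_pi fun i => ?_
  have hcont : ∀ m : ℕ, Continuous (fun v : {v : ∀ n : ℕ, Fin (n + 2) → ℝ //
      (∀ n, v n ∈ simplexSet (n + 2) 1) ∧ ∀ n, v n = A n (v (n + 1))} =>
      Qmap B n m (v.1 (n + m)) i) := by
    intro m
    exact (continuous_apply i).comp ((Qmap B n m).continuous_of_finiteDimensional.comp
      ((continuous_apply (n + m)).comp continuous_subtype_val))
  have hunif : TendstoUniformly (fun m v => Qmap B n m (v.1 (n + m)) i)
      (fun v : {v : ∀ n : ℕ, Fin (n + 2) → ℝ //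
        (∀ n, v n ∈ simplexSet (n + 2) 1) ∧ ∀ n, v n = A n (v (n + 1))} =>
        FF B v.1 n i) atTop := by
    rw [Metric.tendstoUniformly_iff]
    intro ε hε
    have htail : Filter.Tendsto (fun m => ∑' j, eps A B (j + (n + m))) atTop (𝓝 0) := by
      have h := tendsto_sum_nat_add (eps A B)
      have hg : Filter.Tendsto (fun m : ℕ => n + m) atTop atTop :=
        (tendsto_add_atTop_nat n).congr (fun d => Nat.add_comm d n)
      exact h.comp hg
    filter_upwards [htail.eventually (gt_mem_nhds hε)] with m hm v
    have hub := unif_bound hA hB hsum v.2.1 v.2.2 n m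
    have h1 : dist (FF B v.1 n i) (Qmap B n m (v.1 (n + m)) i) ≤
        ∑' j, eps A B (j + (n + m)) := by
      rw [Real.dist_eq]
      refine le_trans ?_ hub
      exact Finset.single_le_sum (f := fun i' => |FF B v.1 n i' - Qmap B n m (v.1 (n + m)) i'|)
        (fun i' _ => abs_nonneg _) (Finset.mem_univ i)
    exact lt_of_le_of_lt h1 hm
  exact hunif.continuous (Filter.Frequently.of_forall hcont)

theorem stmt14
    (A B : ∀ n : ℕ, (Fin (n + 3) → ℝ) →ₗ[ℝ] (Fin (n + 2) → ℝ))
    (hA : ∀ n, ∀ v ∈ simplexSet (n + 3) 1, A n v ∈ simplexSet (n + 2) 1)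
    (hB : ∀ n, ∀ v ∈ simplexSet (n + 3) 1, B n v ∈ simplexSet (n + 2) 1)
    (hsum : Summable fun n : ℕ =>
      ⨆ v : (simplexSet (n + 3) 1), ∑ i, |A n (v : Fin (n + 3) → ℝ) i - B n (v : Fin (n + 3) → ℝ) i|) :
    AffinelyHomeomorphic
      {v : ∀ n : ℕ, Fin (n + 2) → ℝ |
        (∀ n, v n ∈ simplexSet (n + 2) 1) ∧ ∀ n, v n = A n (v (n + 1))}
      {v : ∀ n : ℕ, Fin (n + 2) → ℝ |
        (∀ n, v n ∈ simplexSet (n + 2) 1) ∧ ∀ n, v n = B n (v (n + 1))} := by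
  have hsumAB : Summable (eps A B) := hsum
  have hsumBA : Summable (eps B A) := by
    have e : eps B A = eps A B := by
      funext n
      unfold eps
      congr 1
      funext v
      exact Finset.sum_congr rfl fun i _ => abs_sub_comm _ _
    rw [e]; exact hsumAB
  refine ⟨{
    toFun := fun v => ⟨FF B v.1, fun n => FF_mem1 hA hB hsumAB v.2.1 v.2.2 n,
      fun n => FF_mem2 hA hB hsumAB v.2.1 v.2.2 n⟩
    invFun := fun w => ⟨FF A w.1, fun n => FF_mem1 hB hA hsumBA w.2.1 w.2.2 n,
      fun n => FF_mem2 hB hA hsumBA w.2.1 w.2.2 n⟩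
    left_inv := fun v => Subtype.ext (FF_inv hA hB hsumAB v.2.1 v.2.2)
    right_inv := fun w => Subtype.ext (FF_inv hB hA hsumBA w.2.1 w.2.2)
    continuous_toFun := (FF_continuous hA hB hsumAB).subtype_mk _
    continuous_invFun := (FF_continuous hB hA hsumBA).subtype_mk _ }, ?_⟩
  rintro x y z t ht0 ht1 hz
  show FF B z.1 = t • FF B x.1 + (1 - t) • FF B y.1
  funext n i
  have hzx : ∀ k, z.1 k = t • x.1 k + (1 - t) • y.1 k := fun k => congrFun hz k
  have hx' := tendsto_FF hA hB hsumAB x.2.1 x.2.2 n i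
  have hy' := tendsto_FF hA hB hsumAB y.2.1 y.2.2 n i
  have hz' := tendsto_FF hA hB hsumAB z.2.1 z.2.2 n i
  have heq : ∀ m, Qmap B n m (z.1 (n + m)) i
      = t * Qmap B n m (x.1 (n + m)) i + (1 - t) * Qmap B n m (y.1 (n + m)) i := by
    intro m
    rw [hzx (n + m), map_add, map_smul, map_smul]
    simp
  have h2 : Filter.Tendsto (fun m => Qmap B n m (z.1 (n + m)) i) atTop
      (𝓝 (t * FF B x.1 n i + (1 - t) * FF B y.1 n i)) := by
    have h3 := (hx'.const_mul t).add (hy'.const_mul (1 - t))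
    exact h3.congr (fun m => (heq m).symm)
  have h4 := tendsto_nhds_unique hz' h2
  simpa using h4
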